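/- For any probability distribution F on the real line with bounded support (i.e., there exist reals u ≤ v such that F assigns probability 1 to [u,v]) and finite mean μ(F), and for any a > 0 and any b > μ(F), there exists a probability distribution F' on the real line with bounded support such that the Kullback–Leibler divergence D(F, F') ≤ a and the mean of F' satisfies μ(F') ≥ b. -/

import Mathlib

open MeasureTheory Real Classical

/-- Kullback–Leibler divergence between measures on ℝ, as an extended real:
`∫ log(dF/dF') dF` when `F ≪ F'`, and `⊤` otherwise. -/
noncomputable def klDivergence (F F' : Measure ℝ) : EReal :=
  if F ≪ F' then ((∫ x, Real.log (F.rnDeriv F' x).toReal ∂F : ℝ) : EReal) else ⊤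

/-- A measure on ℝ has bounded support if it assigns probability one to some
compact interval `[u, v]`. -/
def HasBoundedSupport (F : Measure ℝ) : Prop :=
  ∃ u v : ℝ, u ≤ v ∧ F (Set.Icc u v) = 1

theorem bounded_perturbation_exists
    (F : Measure ℝ) [IsProbabilityMeasure F]
    (hF : HasBoundedSupport F)
    (hInt : Integrable (fun x => x) F)
    (a b : ℝ) (ha : 0 < a) (hb : (∫ x, x ∂F) < b) :
    ∃ F' : Measure ℝ, IsProbabilityMeasure F' ∧ HasBoundedSupport F' ∧
      klDivergence F F' ≤ (a : EReal) ∧ b ≤ ∫ x, x ∂F' := by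
  obtain ⟨u, v, huv, hFuv⟩ := hF
  set μF := ∫ x, x ∂F with hμF
  have hexp_pos : 0 < Real.exp (-a) := Real.exp_pos _
  have hexp_lt : Real.exp (-a) < 1 := Real.exp_lt_one_iff.mpr (by linarith)
  set t : ℝ := 1 - Real.exp (-a) with ht
  have ht_pos : 0 < t := by simp [ht]; linarith
  set c : ℝ := max v ((b - Real.exp (-a) * μF) / t) with hc
  have hvc : v ≤ c := le_max_left _ _
  have huc : u ≤ c := le_trans huv hvc
  set r : ENNReal := ENNReal.ofReal (Real.exp (-a)) with hr
  set s : ENNReal := ENNReal.ofReal t with hs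
  have hr0 : r ≠ 0 := by simp [hr, hexp_pos]
  have hrtop : r ≠ ⊤ := ENNReal.ofReal_ne_top
  have hstop : s ≠ ⊤ := ENNReal.ofReal_ne_top
  have hrs : r + s = 1 := by
    rw [hr, hs, ← ENNReal.ofReal_add hexp_pos.le ht_pos.le]
    simp [ht]
  set F' : Measure ℝ := r • F + s • Measure.dirac c with hF'
  have hF'prob : IsProbabilityMeasure F' := by
    constructor
    simp [hF', Measure.add_apply, Measure.smul_apply, smul_eq_mul, hrs]
  have hF'Icc : F' (Set.Icc u c) = 1 := by
    have h1 : F (Set.Icc u c) = 1 := by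
      refine le_antisymm prob_le_one ?_
      rw [← hFuv]
      exact measure_mono (Set.Icc_subset_Icc le_rfl hvc)
    have h2 : Measure.dirac c (Set.Icc u c) = 1 := by
      rw [Measure.dirac_apply' _ measurableSet_Icc]
      simp [Set.indicator, huc]
    simp [hF', Measure.add_apply, Measure.smul_apply, smul_eq_mul, h1, h2, hrs]
  -- absolute continuity
  have habs : F ≪ F' := by
    refine Measure.AbsolutelyContinuous.mk fun s' hs' h0 => ?_
    simp only [hF', Measure.add_apply, Measure.smul_apply, smul_eq_mul,
      add_eq_zero, mul_eq_zero] at h0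
    rcases h0.1 with h | h
    · exact absurd h hr0
    · exact h
  refine ⟨F', hF'prob, ⟨u, c, huc, hF'Icc⟩, ?_, ?_⟩
  · -- KL divergence bound
    have hle : F ≤ r⁻¹ • F' := by
      intro s' -- Measure.le_iff might be needed
      have : r • F s' ≤ F' s' := by
        simp only [hF', Measure.add_apply, Measure.smul_apply, smul_eq_mul]
        exact le_add_of_nonneg_right (zero_le)
      calc F s' = r⁻¹ * (r * F s') := by
            rw [← mul_assoc, ENNReal.inv_mul_cancel hr0 hrtop, one_mul]
        _ ≤ r⁻¹ * F' s' := by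
            exact mul_le_mul_right this _
        _ = (r⁻¹ • F') s' := by simp [Measure.smul_apply, smul_eq_mul]
    haveI : IsFiniteMeasure (r⁻¹ • F') := by
      constructor
      simp only [Measure.smul_apply, smul_eq_mul]
      exact ENNReal.mul_lt_top (ENNReal.inv_lt_top.mpr hr0.bot_lt)
        (measure_lt_top _ _)
    have h2 : F.rnDeriv (r⁻¹ • F') ≤ᵐ[r⁻¹ • F'] 1 := Measure.rnDeriv_le_one_of_le hle
    have h2' : F.rnDeriv (r⁻¹ • F') ≤ᵐ[F'] 1 := by
      rwa [Measure.ae_ennreal_smul_measure_eq (by simp [hr0, hrtop])] at h2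
    have h3 : F.rnDeriv (r⁻¹ • F') =ᵐ[F'] (r⁻¹)⁻¹ • F.rnDeriv F' :=
      Measure.rnDeriv_smul_right_of_ne_top F F' (by simp [hrtop])
        (by simp [hr0])
    have h4 : ∀ᵐ x ∂F', F.rnDeriv F' x ≤ r⁻¹ := by
      filter_upwards [h2', h3] with x hx hx'
      rw [hx'] at hx
      simp only [inv_inv, Pi.smul_apply, smul_eq_mul, Pi.one_apply] at hx
      rwa [ENNReal.le_inv_iff_mul_le, mul_comm]
    have h5 : ∀ᵐ x ∂F, F.rnDeriv F' x ≤ r⁻¹ := habs.ae_le h4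
    have hlog : ∀ᵐ x ∂F, Real.log (F.rnDeriv F' x).toReal ≤ a := by
      filter_upwards [h5] with x hx
      have hxR : (F.rnDeriv F' x).toReal ≤ Real.exp a := by
        have := ENNReal.toReal_mono (by simp [hr0]) hx
        refine this.trans ?_
        rw [hr, ← ENNReal.ofReal_inv_of_pos hexp_pos,
          ENNReal.toReal_ofReal (by positivity), ← Real.exp_neg, neg_neg]
      rcases le_or_gt (F.rnDeriv F' x).toReal 0 with h | h
      · have h0 : (F.rnDeriv F' x).toReal = 0 := le_antisymm h ENNReal.toReal_nonneg
        rw [h0, Real.log_zero]; linarith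
      · exact (Real.log_le_iff_le_exp h).mpr hxR
    rw [klDivergence, if_pos habs]
    rw [show ((a : ℝ) : EReal) = ((a : ℝ) : EReal) from rfl, EReal.coe_le_coe_iff]
    by_cases hI : Integrable (fun x => Real.log (F.rnDeriv F' x).toReal) F
    · calc ∫ x, Real.log (F.rnDeriv F' x).toReal ∂F
          ≤ ∫ _, a ∂F := integral_mono_ae hI (integrable_const a) hlog
        _ = a := by simp
    · rw [integral_undef hI]; linarith
  · -- mean bound
    have hint1 : Integrable (fun x => x) (r • F) := hInt.smul_measure hrtop
    have hint2 : Integrable (fun x => x) ((s • Measure.dirac c : Measure ℝ)) := by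
      refine Integrable.smul_measure ?_ hstop
      refine (integrable_const c).congr ?_
      rw [Filter.EventuallyEq, MeasureTheory.ae_dirac_eq]
      simp
    have hmean : ∫ x, x ∂F' = Real.exp (-a) * μF + t * c := by
      rw [hF', integral_add_measure hint1 hint2, integral_smul_measure,
        integral_smul_measure, integral_dirac (fun x : ℝ => x) c,
        ENNReal.toReal_ofReal hexp_pos.le, ENNReal.toReal_ofReal ht_pos.le]
      simp only [smul_eq_mul, ← hμF, ht]
      try ring
    rw [hmean]
    have hcge : (b - Real.exp (-a) * μF) / t ≤ c := le_max_right _ _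
    have := (div_le_iff₀ ht_pos).mp hcge
    linarith
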